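/- Let β > 0, ν > 0, T > 0, and let X = (X_n)_{n≥1} be a weak solution of the viscous dyadic model on [0,T] such that X(0) ∈ 𝒟^∞ and lim_{n→∞} ( sup_{t∈[0,T]} (λ_n^{β-2} |X_n(t)|) ) = 0. Then X(t) ∈ 𝒟^∞ for all t ∈ [0,T], i.e. for every γ > 0, sup_{t∈[0,T]} sup_{n≥1} (λ_n^γ |X_n(t)|) < ∞. -/

import Mathlib

/-- The dyadic frequencies: `λ_0 = 0`, `λ_n = 2^n` for `n ≥ 1`. -/
noncomputable def lam (n : ℕ) : ℝ := if n = 0 then 0 else 2 ^ n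

/-- `X` is a weak solution of the viscous dyadic model with parameter `β` and
viscosity `ν` on the interval `I`. -/
def IsViscousSolution (β ν : ℝ) (I : Set ℝ) (X : ℕ → ℝ → ℝ) : Prop :=
  ∀ n, 1 ≤ n → ∀ t ∈ I, HasDerivWithinAt (X n)
    (-ν * lam n ^ 2 * X n t + lam (n - 1) ^ β * (X (n - 1) t) ^ 2
      - lam n ^ β * X n t * X (n + 1) t) I t

lemma lam_nonneg (n : ℕ) : 0 ≤ lam n := by
  unfold lam; split <;> positivity

lemma lam_rpow {n : ℕ} (h : 1 ≤ n) (a : ℝ) : lam n ^ a = (2:ℝ) ^ ((n:ℝ) * a) := by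
  unfold lam
  rw [if_neg (by omega), ← Real.rpow_natCast (2:ℝ) n, ← Real.rpow_mul (by norm_num)]

lemma lam_sq {n : ℕ} (h : 1 ≤ n) : lam n ^ (2:ℕ) = (2:ℝ) ^ ((n:ℝ) * 2) := by
  unfold lam
  rw [if_neg (by omega), ← pow_mul, ← Real.rpow_natCast (2:ℝ) (n*2)]
  push_cast
  ring_nf

lemma two_rpow_two : (2:ℝ) ^ (2:ℝ) = 4 := by
  have := Real.rpow_natCast (2:ℝ) 2
  norm_num at this
  linarith

lemma ode_bound {Y G : ℝ → ℝ} {k g T : ℝ} (hk : 0 < k) (hg : 0 ≤ g) (hT : 0 < T)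
    (hY : ∀ t ∈ Set.Icc (0:ℝ) T, HasDerivWithinAt Y (-k * Y t + G t) (Set.Icc 0 T) t)
    (hG : ∀ t ∈ Set.Icc (0:ℝ) T, |G t| ≤ g) :
    ∀ t ∈ Set.Icc (0:ℝ) T, |Y t| ≤ |Y 0| + g / k := by
  have hYc : ContinuousOn Y (Set.Icc 0 T) := fun t ht => (hY t ht).continuousWithinAt
  set Z : ℝ → ℝ := fun t => Real.exp (k*t) * Y t with hZdef
  set B : ℝ → ℝ := fun t => |Y 0| + g/k * (Real.exp (k*t) - 1) with hBdef
  have hZc : ContinuousOn Z (Set.Icc 0 T) :=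
    ((Real.continuous_exp.comp (continuous_const.mul continuous_id)).continuousOn).mul hYc
  have hZd : ∀ x ∈ Set.Ico (0:ℝ) T,
      HasDerivWithinAt Z (Real.exp (k*x) * G x) (Set.Ici x) x := by
    intro x hx
    have hxI : x ∈ Set.Icc (0:ℝ) T := ⟨hx.1, hx.2.le⟩
    have he : HasDerivAt (fun t => Real.exp (k*t)) (Real.exp (k*x) * k) x := by
      simpa [Function.comp_def] using (Real.hasDerivAt_exp (k*x)).comp x ((hasDerivAt_id x).const_mul k)
    have hYd : HasDerivWithinAt Y (-k * Y x + G x) (Set.Ici x) x := by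
      have hsub : Set.Icc x T ⊆ Set.Icc (0:ℝ) T := Set.Icc_subset_Icc hx.1 le_rfl
      exact ((hY x hxI).mono hsub).mono_of_mem_nhdsWithin
        (Icc_mem_nhdsGE_of_mem ⟨le_rfl, hx.2⟩)
    have := (he.hasDerivWithinAt (s := Set.Ici x)).mul hYd
    exact this.congr_deriv (by ring)
  have ha : ‖Z 0‖ ≤ B 0 := by simp [hZdef, hBdef]
  have hBd : ∀ x : ℝ, HasDerivAt B (g * Real.exp (k*x)) x := by
    intro x
    have he : HasDerivAt (fun t => Real.exp (k*t)) (Real.exp (k*x) * k) x := by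
      simpa [Function.comp_def] using (Real.hasDerivAt_exp (k*x)).comp x ((hasDerivAt_id x).const_mul k)
    have h2 := ((he.sub_const 1).const_mul (g/k)).const_add (|Y 0|)
    exact h2.congr_deriv (by field_simp)
  have bound : ∀ x ∈ Set.Ico (0:ℝ) T, ‖Real.exp (k*x) * G x‖ ≤ g * Real.exp (k*x) := by
    intro x hx
    have := hG x ⟨hx.1, hx.2.le⟩
    have hep : (0:ℝ) < Real.exp (k*x) := Real.exp_pos _
    rw [Real.norm_eq_abs, abs_mul, abs_of_pos hep]
    nlinarith
  have key : ∀ ⦃t⦄, t ∈ Set.Icc (0:ℝ) T → ‖Z t‖ ≤ B t :=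
    image_norm_le_of_norm_deriv_right_le_deriv_boundary hZc hZd ha hBd bound
  intro t ht
  have hZ := key ht
  have hep : (0:ℝ) < Real.exp (k*t) := Real.exp_pos _
  have h1 : (1:ℝ) ≤ Real.exp (k*t) := by
    rw [show (1:ℝ) = Real.exp 0 by simp]
    exact Real.exp_le_exp.2 (by nlinarith [ht.1])
  rw [Real.norm_eq_abs, hZdef] at hZ
  simp only at hZ
  rw [abs_mul, abs_of_pos hep] at hZ
  have hgk : 0 ≤ g / k := div_nonneg hg hk.le
  have hB : B t ≤ Real.exp (k*t) * (|Y 0| + g/k) := by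
    simp only [hBdef]
    nlinarith [abs_nonneg (Y 0)]
  exact (mul_le_mul_iff_right₀ hep).1 (hZ.trans hB)


set_option maxHeartbeats 1000000 in
/-- regularity criterion. If `X(0) ∈ 𝒟^∞` and
`lim_{n→∞} sup_{t∈[0,T]} λ_n^{β-2} |X_n(t)| = 0`, then `X(t) ∈ 𝒟^∞` for all `t`,
uniformly: for every `γ > 0`, `sup_{t∈[0,T]} sup_{n≥1} λ_n^γ |X_n(t)| < ∞`. -/
theorem viscous_regularity_criterion
    (β ν T : ℝ) (hβ : 0 < β) (hν : 0 < ν) (hT : 0 < T)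
    (X : ℕ → ℝ → ℝ) (hX : IsViscousSolution β ν (Set.Icc 0 T) X)
    (hX0 : ∀ γ : ℝ, 0 < γ → ∃ C : ℝ, ∀ n, 1 ≤ n → lam n ^ γ * |X n 0| ≤ C)
    (hlim : ∀ η : ℝ, 0 < η → ∃ N : ℕ, ∀ n, N ≤ n → ∀ t ∈ Set.Icc (0 : ℝ) T,
      lam n ^ (β - 2) * |X n t| ≤ η) :
    ∀ γ : ℝ, 0 < γ → ∃ C : ℝ, ∀ t ∈ Set.Icc (0 : ℝ) T, ∀ n, 1 ≤ n →
      lam n ^ γ * |X n t| ≤ C := by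
  intro γ hγ
  obtain ⟨C₀, hC₀⟩ := hX0 γ hγ
  set C₁ := max C₀ 0 with hC₁def
  have hC₁0 : 0 ≤ C₁ := le_max_right _ _
  have hC₁b : ∀ n, 1 ≤ n → lam n ^ γ * |X n 0| ≤ C₁ :=
    fun n hn => (hC₀ n hn).trans (le_max_left _ _)
  set η := min (ν / (2:ℝ) ^ γ) (ν * (2:ℝ) ^ (β - 2) / 2) with hηdef
  have hη : 0 < η := lt_min (by positivity) (by positivity)
  have hη1 : η * (2:ℝ) ^ γ ≤ ν := by
    have h := min_le_left (ν / (2:ℝ) ^ γ) (ν * (2:ℝ) ^ (β - 2) / 2)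
    have h2 : (0:ℝ) < (2:ℝ) ^ γ := Real.rpow_pos_of_pos (by norm_num) _
    rw [le_div_iff₀ h2] at h
    exact h
  have hη2 : (2:ℝ) ^ (2 - β) * η ≤ ν / 2 := by
    have h := min_le_right (ν / (2:ℝ) ^ γ) (ν * (2:ℝ) ^ (β - 2) / 2)
    have h2 : (0:ℝ) < (2:ℝ) ^ (2 - β) := Real.rpow_pos_of_pos (by norm_num) _
    have h3 : (2:ℝ) ^ (2 - β) * (2:ℝ) ^ (β - 2) = 1 := by
      rw [← Real.rpow_add (by norm_num)]; norm_num
    calc (2:ℝ) ^ (2 - β) * η ≤ (2:ℝ) ^ (2 - β) * (ν * (2:ℝ) ^ (β - 2) / 2) := by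
          exact mul_le_mul_of_nonneg_left h h2.le
      _ = ν / 2 := by
          field_simp
          nlinarith [h3]
  obtain ⟨N₀, hN₀⟩ := hlim η hη
  set N := max N₀ 1 with hNdef
  have hN1 : 1 ≤ N := le_max_right _ _
  have hNb : ∀ n, N ≤ n → ∀ t ∈ Set.Icc (0:ℝ) T, lam n ^ (β - 2) * |X n t| ≤ η :=
    fun n hn => hN₀ n (le_trans (le_max_left _ _) hn)
  -- continuity and suprema
  have hcont : ∀ n, 1 ≤ n → ContinuousOn (X n) (Set.Icc 0 T) :=
    fun n hn t ht => (hX n hn t ht).continuousWithinAt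
  set S : ℕ → ℝ := fun n => sSup ((fun t => |X n t|) '' Set.Icc 0 T) with hSdef
  have hne : ∀ n : ℕ, ((fun t => |X n t|) '' Set.Icc (0:ℝ) T).Nonempty :=
    fun n => ⟨|X n 0|, 0, ⟨le_rfl, hT.le⟩, rfl⟩
  have hbdd : ∀ n, 1 ≤ n → BddAbove ((fun t => |X n t|) '' Set.Icc (0:ℝ) T) :=
    fun n hn => (isCompact_Icc.image_of_continuousOn (hcont n hn).abs).bddAbove
  have hSle : ∀ n, 1 ≤ n → ∀ t ∈ Set.Icc (0:ℝ) T, |X n t| ≤ S n :=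
    fun n hn t ht => le_csSup (hbdd n hn) ⟨t, ht, rfl⟩
  have hSub : ∀ n, 1 ≤ n → ∀ c : ℝ, (∀ t ∈ Set.Icc (0:ℝ) T, |X n t| ≤ c) → S n ≤ c := by
    intro n hn c hc
    apply csSup_le (hne n)
    rintro _ ⟨t, ht, rfl⟩
    exact hc t ht
  have hS0 : ∀ n, 1 ≤ n → 0 ≤ S n :=
    fun n hn => le_trans (abs_nonneg _) (hSle n hn 0 ⟨le_rfl, hT.le⟩)
  set b : ℕ → ℝ := fun n => lam n ^ γ * S n with hbdef
  have hb0 : ∀ n, 1 ≤ n → 0 ≤ b n := fun n hn =>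
    mul_nonneg (Real.rpow_nonneg (lam_nonneg n) γ) (hS0 n hn)
  -- the key recursion
  have hrec : ∀ n, N ≤ n → b (n+1) ≤ 2 * C₁ + b n / 2 := by
    intro n hn
    have hn1 : 1 ≤ n := le_trans hN1 hn
    have hn1' : 1 ≤ n + 1 := by omega
    set P : ℝ := (2:ℝ) ^ ((n:ℝ) * γ) with hPdef
    set q : ℝ := (2:ℝ) ^ ((n:ℝ) * 2) with hqdef
    set L : ℝ := (2:ℝ) ^ (((n:ℝ) + 1) * γ) with hLdef
    set Q : ℝ := (2:ℝ) ^ (((n:ℝ) + 1) * 2) with hQdef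
    have hPpos : 0 < P := Real.rpow_pos_of_pos (by norm_num) _
    have hqpos : 0 < q := Real.rpow_pos_of_pos (by norm_num) _
    have hLpos : 0 < L := Real.rpow_pos_of_pos (by norm_num) _
    have hQpos : 0 < Q := Real.rpow_pos_of_pos (by norm_num) _
    set k : ℝ := ν * Q with hkdef
    have hkpos : 0 < k := by positivity
    set G : ℝ → ℝ := fun t => lam n ^ β * (X n t) ^ 2 - lam (n+1) ^ β * X (n+1) t * X (n+2) t
      with hGdef
    set g1 : ℝ := η * (q * S n) with hg1def
    set g2 : ℝ := (2:ℝ) ^ (2 - β) * (η * (Q * S (n+1))) with hg2def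
    have hg1nn : 0 ≤ g1 :=
      mul_nonneg hη.le (mul_nonneg hqpos.le (hS0 n hn1))
    have hg2nn : 0 ≤ g2 :=
      mul_nonneg (Real.rpow_pos_of_pos (by norm_num) _).le
        (mul_nonneg hη.le (mul_nonneg hQpos.le (hS0 (n+1) hn1')))
    have hderiv : ∀ t ∈ Set.Icc (0:ℝ) T,
        HasDerivWithinAt (X (n+1)) (-k * X (n+1) t + G t) (Set.Icc 0 T) t := by
      intro t ht
      have h := hX (n+1) hn1' t ht
      simp only [Nat.add_sub_cancel] at h
      have heq : -ν * lam (n+1) ^ 2 * X (n+1) t + lam n ^ β * (X n t) ^ 2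
          - lam (n+1) ^ β * X (n+1) t * X (n+2) t = -k * X (n+1) t + G t := by
        rw [hGdef, hkdef, hQdef, lam_sq hn1']
        push_cast
        ring
      rw [heq] at h
      exact h
    have hGb : ∀ t ∈ Set.Icc (0:ℝ) T, |G t| ≤ g1 + g2 := by
      intro t ht
      have b1 : (2:ℝ) ^ ((n:ℝ) * (β - 2)) * |X n t| ≤ η := by
        have := hNb n hn t ht
        rwa [lam_rpow hn1] at this
      have b2 : (2:ℝ) ^ (((n:ℝ) + 2) * (β - 2)) * |X (n+2) t| ≤ η := by
        have := hNb (n+2) (by omega) t ht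
        rw [lam_rpow (by omega)] at this
        push_cast at this
        exact this
      have b3 : |X n t| ≤ S n := hSle n hn1 t ht
      have b4 : |X (n+1) t| ≤ S (n+1) := hSle (n+1) hn1' t ht
      have e1 : lam n ^ β = (2:ℝ) ^ ((n:ℝ) * (β - 2)) * q := by
        rw [lam_rpow hn1, hqdef, ← Real.rpow_add (by norm_num)]
        congr 1; ring
      have e2 : lam (n+1) ^ β
          = ((2:ℝ) ^ (2 - β) * (2:ℝ) ^ (((n:ℝ) + 2) * (β - 2))) * Q := by
        rw [lam_rpow (show 1 ≤ n+1 by omega), hQdef, ← Real.rpow_add (by norm_num),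
          ← Real.rpow_add (by norm_num)]
        push_cast
        congr 1; ring
      have hp1 : (0:ℝ) < (2:ℝ) ^ ((n:ℝ) * (β - 2)) := Real.rpow_pos_of_pos (by norm_num) _
      have hp2 : (0:ℝ) < (2:ℝ) ^ (((n:ℝ) + 2) * (β - 2)) := Real.rpow_pos_of_pos (by norm_num) _
      have hp3 : (0:ℝ) < (2:ℝ) ^ (2 - β) := Real.rpow_pos_of_pos (by norm_num) _
      have termA : lam n ^ β * (X n t) ^ 2 ≤ g1 := by
        have calc1 : lam n ^ β * (X n t) ^ 2
            = ((2:ℝ) ^ ((n:ℝ) * (β - 2)) * |X n t|) * (q * |X n t|) := by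
          rw [e1, ← sq_abs (X n t)]
          ring
        rw [calc1, hg1def]
        apply mul_le_mul b1 (mul_le_mul_of_nonneg_left b3 hqpos.le) (by positivity) hη.le
      have termB : lam (n+1) ^ β * |X (n+1) t| * |X (n+2) t| ≤ g2 := by
        have calc2 : lam (n+1) ^ β * |X (n+1) t| * |X (n+2) t|
            = (2:ℝ) ^ (2 - β) * (((2:ℝ) ^ (((n:ℝ) + 2) * (β - 2)) * |X (n+2) t|)
              * (Q * |X (n+1) t|)) := by
          rw [e2]
          ring
        rw [calc2, hg2def]
        apply mul_le_mul_of_nonneg_left _ hp3.le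
        apply mul_le_mul b2 (mul_le_mul_of_nonneg_left b4 hQpos.le) (by positivity) hη.le
      have habs : |G t| ≤ lam n ^ β * (X n t) ^ 2
          + lam (n+1) ^ β * |X (n+1) t| * |X (n+2) t| := by
        rw [hGdef]
        have h1 : |lam n ^ β * (X n t) ^ 2| = lam n ^ β * (X n t) ^ 2 := by
          apply abs_of_nonneg
          have : (0:ℝ) ≤ lam n ^ β := Real.rpow_nonneg (lam_nonneg n) β
          positivity
        have h2 : |lam (n+1) ^ β * X (n+1) t * X (n+2) t|
            = lam (n+1) ^ β * |X (n+1) t| * |X (n+2) t| := by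
          rw [abs_mul, abs_mul, abs_of_nonneg (Real.rpow_nonneg (lam_nonneg (n+1)) β)]
        calc |lam n ^ β * (X n t) ^ 2 - lam (n+1) ^ β * X (n+1) t * X (n+2) t|
            ≤ |lam n ^ β * (X n t) ^ 2| + |lam (n+1) ^ β * X (n+1) t * X (n+2) t| :=
              abs_sub _ _
          _ = _ := by rw [h1, h2]
      linarith [habs, termA, termB]
    -- apply the ODE bound
    have hodeb := ode_bound hkpos (by linarith) hT hderiv hGb
    have hS : S (n+1) ≤ |X (n+1) 0| + (g1 + g2) / k := hSub (n+1) hn1' _ hodeb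
    -- multiply by L
    have hlamL : lam (n+1) ^ γ = L := by
      rw [lam_rpow hn1', hLdef]; push_cast; ring_nf
    have hbn1 : b (n+1) ≤ L * |X (n+1) 0| + L * ((g1 + g2) / k) := by
      rw [hbdef]
      simp only
      rw [hlamL]
      calc L * S (n+1) ≤ L * (|X (n+1) 0| + (g1 + g2) / k) :=
            mul_le_mul_of_nonneg_left hS hLpos.le
        _ = L * |X (n+1) 0| + L * ((g1 + g2) / k) := by ring
    have hL0 : L * |X (n+1) 0| ≤ C₁ := by
      rw [← hlamL]; exact hC₁b (n+1) hn1'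
    -- bound L * (g1+g2)/k
    have I1 : L * q = (2:ℝ) ^ (γ - 2) * (P * Q) := by
      rw [hLdef, hqdef, hPdef, hQdef, ← Real.rpow_add (by norm_num),
        ← Real.rpow_add (by norm_num), ← Real.rpow_add (by norm_num)]
      congr 1; ring
    have I2 : (2:ℝ) ^ (γ - 2) * 4 = (2:ℝ) ^ γ := by
      have h4 : (2:ℝ) ^ (γ - 2) * (2:ℝ) ^ (2:ℝ) = (2:ℝ) ^ γ := by
        rw [← Real.rpow_add (by norm_num)]; congr 1; ring
      rw [← two_rpow_two]; exact h4
    have hbnP : b n = P * S n := by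
      rw [hbdef]; simp only; rw [lam_rpow hn1, hPdef]
    have hcoef1 : η * (2:ℝ) ^ (γ - 2) ≤ ν / 4 := by
      nlinarith [I2, hη1, Real.rpow_pos_of_pos (show (0:ℝ) < 2 by norm_num) (γ - 2)]
    have hterm1 : L * g1 ≤ k * ((1/4) * b n) := by
      have : L * g1 = (η * (2:ℝ) ^ (γ - 2)) * (P * Q * S n) := by
        rw [hg1def]
        calc L * (η * (q * S n)) = η * (L * q) * S n := by ring
          _ = (η * (2:ℝ) ^ (γ - 2)) * (P * Q * S n) := by rw [I1]; ring
      rw [this, hkdef, hbnP]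
      have hPQS : 0 ≤ P * Q * S n :=
        mul_nonneg (mul_nonneg hPpos.le hQpos.le) (hS0 n hn1)
      calc (η * (2:ℝ) ^ (γ - 2)) * (P * Q * S n) ≤ (ν / 4) * (P * Q * S n) :=
            mul_le_mul_of_nonneg_right hcoef1 hPQS
        _ = ν * Q * (1/4 * (P * S n)) := by ring
    have hbn1P : b (n+1) = L * S (n+1) := by
      rw [hbdef]; simp only; rw [hlamL]
    have hterm2 : L * g2 ≤ k * ((1/2) * b (n+1)) := by
      have : L * g2 = ((2:ℝ) ^ (2 - β) * η) * (Q * (L * S (n+1))) := by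
        rw [hg2def]; ring
      rw [this, hkdef, hbn1P]
      have hQLS : 0 ≤ Q * (L * S (n+1)) :=
        mul_nonneg hQpos.le (mul_nonneg hLpos.le (hS0 (n+1) hn1'))
      calc ((2:ℝ) ^ (2 - β) * η) * (Q * (L * S (n+1)))
          ≤ (ν / 2) * (Q * (L * S (n+1))) := mul_le_mul_of_nonneg_right hη2 hQLS
        _ = ν * Q * (1/2 * (L * S (n+1))) := by ring
    have hdivb : L * ((g1 + g2) / k) ≤ (1/4) * b n + (1/2) * b (n+1) := by
      rw [show L * ((g1 + g2) / k) = (L * g1 + L * g2) / k by ring, div_le_iff₀ hkpos]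
      nlinarith [hterm1, hterm2]
    linarith [hbn1, hL0, hdivb]
  -- the tail is bounded
  have htail : ∀ m : ℕ, b (N + m) ≤ max (b N) (4 * C₁) := by
    intro m
    induction m with
    | zero => simpa using le_max_left _ _
    | succ m ih =>
      have h : b (N + m + 1) ≤ 2 * C₁ + b (N + m) / 2 := hrec (N + m) (Nat.le_add_right N m)
      have h2 : 2 * C₁ ≤ max (b N) (4 * C₁) / 2 := by
        have := le_max_right (b N) (4 * C₁); linarith
      calc b (N + (m+1)) = b (N + m + 1) := by rw [Nat.add_succ]
        _ ≤ 2 * C₁ + b (N + m) / 2 := h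
        _ ≤ max (b N) (4*C₁)/2 + max (b N) (4*C₁)/2 := by linarith
        _ = max (b N) (4*C₁) := by ring
  set D := max (b N) (4 * C₁) with hDdef
  have hD0 : 0 ≤ D := le_trans (by linarith) (le_max_right (b N) (4 * C₁))
  refine ⟨D + ∑ i ∈ Finset.range (N+1), max (b i) 0, ?_⟩
  intro t ht n hn
  have h1 : lam n ^ γ * |X n t| ≤ b n :=
    mul_le_mul_of_nonneg_left (hSle n hn t ht) (Real.rpow_nonneg (lam_nonneg n) γ)
  have hsumnn : (0:ℝ) ≤ ∑ i ∈ Finset.range (N+1), max (b i) 0 :=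
    Finset.sum_nonneg (fun i _ => le_max_right _ _)
  have h2 : b n ≤ D + ∑ i ∈ Finset.range (N+1), max (b i) 0 := by
    rcases le_or_gt n N with h | h
    · have hmem : n ∈ Finset.range (N+1) := Finset.mem_range.2 (by omega)
      have hs := Finset.single_le_sum (f := fun i => max (b i) 0)
        (fun i _ => le_max_right _ _) hmem
      have hb : b n ≤ max (b n) 0 := le_max_left _ _
      linarith
    · obtain ⟨m, rfl⟩ : ∃ m, n = N + m := ⟨n - N, by omega⟩
      have := htail m
      linarith
  linarith
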